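/- Let n ≥ 5 be odd and let G be the complete graph K_n with one edge uv removed. Then G cannot be covered by (n−1)/2 Hamilton cycles, i.e. there is no set of (n−1)/2 Hamilton cycles of G whose union of edge sets equals E(G). -/

import Mathlib

open Finset

section Aux
variable {V : Type*} [DecidableEq V] {G : SimpleGraph V}

lemma countP_edges_aux {a b : V} (p : G.Walk a b) (w : V) :
    Multiset.countP (fun e => w ∈ e) (p.edges : Multiset (Sym2 V)) =
      p.support.dropLast.count w + p.support.tail.count w := by
  induction p with
  | nil => simp
  | @cons u x b h q ih =>
    have hx : q.support = x :: q.support.tail := q.support_eq_cons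
    have hdl : (u :: q.support).dropLast = u :: q.support.dropLast := by
      rw [hx]; rfl
    have c2 : q.support.count w = q.support.tail.count w + (if x = w then 1 else 0) := by
      conv_lhs => rw [hx]
      rw [List.count_cons]
      simp [beq_iff_eq]
    rw [SimpleGraph.Walk.edges_cons, SimpleGraph.Walk.support_cons, List.tail_cons, hdl]
    rw [show ((s(u,x) :: q.edges : List (Sym2 V)) : Multiset (Sym2 V))
          = s(u,x) ::ₘ (q.edges : Multiset (Sym2 V)) from rfl,
        Multiset.countP_cons, ih, List.count_cons]
    have hne : u ≠ x := h.ne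
    clear hx hdl ih
    rw [c2]
    rcases eq_or_ne w u with rfl | hwu
    · have hwx : x ≠ w := fun hh => hne hh.symm
      simp [Sym2.mem_iff, hwx]
      omega
    · rcases eq_or_ne w x with rfl | hwx
      · simp [Sym2.mem_iff, Ne.symm hwu]
        omega
      · simp [Sym2.mem_iff, Ne.symm hwu, hwu, hwx, Ne.symm hwx]

lemma countP_edges_two {a : V} {p : G.Walk a a} (hp : p.IsHamiltonianCycle) (w : V) :
    Multiset.countP (fun e => w ∈ e) (p.edges : Multiset (Sym2 V)) = 2 := by
  rw [countP_edges_aux]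
  have hnil := hp.isCycle.not_nil
  have h1 : p.support.tail.count w = 1 := by
    rw [← SimpleGraph.Walk.support_tail_of_not_nil p hnil]
    exact hp.isHamiltonian_tail w
  have hne : p.support ≠ [] := p.support_ne_nil
  have hsplit := List.dropLast_append_getLast hne
  have hlast : p.support.getLast hne = a := p.getLast_support
  have hc : p.support.count w = p.support.dropLast.count w + [a].count w := by
    conv_lhs => rw [← hsplit]
    rw [List.count_append, hlast]
  by_cases hw : w = a
  · subst hw
    have h2 := hp.count_support_self
    simp at hc
    omega
  · have h2 := hp.support_count_of_ne (Ne.symm hw)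
    simp [List.count_singleton, Ne.symm hw] at hc
    omega

end Aux

section Sums
variable {α : Type*} [DecidableEq α] {ι : Type*}

lemma countP_sum' (p : α → Prop) [DecidablePred p] (t : Finset ι) (g : ι → Multiset α) :
    (∑ i ∈ t, g i).countP p = ∑ i ∈ t, (g i).countP p := by
  induction t using Finset.cons_induction with
  | empty => simp
  | cons a t ha ih => simp [Finset.sum_cons, ih]

lemma card_sum' (t : Finset ι) (g : ι → Multiset α) :
    (∑ i ∈ t, g i).card = ∑ i ∈ t, (g i).card := by
  induction t using Finset.cons_induction with
  | empty => simp
  | cons a t ha ih => simp [Finset.sum_cons, ih]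

lemma mem_sum' {x : α} {t : Finset ι} {g : ι → Multiset α} :
    x ∈ ∑ i ∈ t, g i ↔ ∃ i ∈ t, x ∈ g i := by
  induction t using Finset.cons_induction with
  | empty => simp
  | cons a t ha ih => simp [Finset.sum_cons, ih]

lemma sum_count_filter (s : Multiset α) (S : Finset α) (p : α → Prop) [DecidablePred p]
    (hs : ∀ x ∈ s, x ∈ S) :
    ∑ e ∈ S.filter p, s.count e = (s.filter p).card := by
  induction s using Multiset.induction with
  | empty => simp
  | cons a s ih =>
    have ha : a ∈ S := hs a (Multiset.mem_cons_self a s)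
    have ih' := ih fun x hx => hs x (Multiset.mem_cons_of_mem hx)
    simp only [Multiset.count_cons, Finset.sum_add_distrib, ih', Multiset.filter_cons]
    rw [Finset.sum_ite_eq' (S.filter p) a fun _ => 1]
    by_cases hpa : p a <;> simp [hpa, ha]

end Sums

/-- For odd `n ≥ 5`, the complete graph `K_n` minus one edge `uv` cannot be
covered by `(n−1)/2` Hamilton cycles. -/
theorem no_cover_Kn_minus_edge (n : ℕ) (hn : 5 ≤ n) (hodd : Odd n)
    (u v : Fin n) (huv : u ≠ v)
    (G : SimpleGraph (Fin n)) (hG : G = (SimpleGraph.completeGraph (Fin n)).deleteEdges {s(u, v)}) :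
    ¬ ∃ f : Fin ((n - 1) / 2) → Σ x : Fin n, G.Walk x x,
        (∀ i, (f i).2.IsHamiltonianCycle) ∧
        (∀ e ∈ G.edgeSet, ∃ i, e ∈ (f i).2.edges) := by
  classical
  rintro ⟨f, hHam, hcov⟩
  obtain ⟨m, hm⟩ := hodd
  have hm2 : 2 ≤ m := by omega
  have hk : (n - 1) / 2 = m := by omega
  rw [SimpleGraph.completeGraph_eq_top] at hG
  set M : Multiset (Sym2 (Fin n)) :=
    ∑ i : Fin ((n - 1) / 2), ((f i).2.edges : Multiset (Sym2 (Fin n))) with hM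
  -- cardinality of the multiset of edges of all cycles
  have hlen : ∀ i, (((f i).2.edges : Multiset (Sym2 (Fin n)))).card = n := by
    intro i
    simp [SimpleGraph.Walk.length_edges, (hHam i).length_eq]
  have hMcard : M.card = m * n := by
    rw [hM, card_sum']
    simp [hlen, hk]
  -- every element of M is an edge of G
  have hmemM : ∀ e ∈ M, e ∈ G.edgeFinset := by
    intro e he
    rw [hM, mem_sum'] at he
    obtain ⟨i, -, hi⟩ := he
    exact SimpleGraph.mem_edgeFinset.2 ((f i).2.edges_subset_edgeSet (by simpa using hi))
  -- every edge of G is covered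
  have hcount1 : ∀ e ∈ G.edgeFinset, 1 ≤ M.count e := by
    intro e he
    obtain ⟨i, hi⟩ := hcov e (SimpleGraph.mem_edgeFinset.1 he)
    exact Multiset.one_le_count_iff_mem.2 (mem_sum'.2 ⟨i, Finset.mem_univ i, by simpa using hi⟩)
  -- number of edges of G
  have hchoose : n.choose 2 = m * n := by
    have hsub : n - 1 = 2 * m := by omega
    have hmul : n * (2 * m) = m * n * 2 := by ring
    rw [Nat.choose_two_right, hsub, hmul, Nat.mul_div_cancel _ (by norm_num)]
  have hScard : G.edgeFinset.card = m * n - 1 := by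
    have h1 : G.edgeFinset = (⊤ : SimpleGraph (Fin n)).edgeFinset \ {s(u, v)} := by
      ext e
      simp [hG, SimpleGraph.edgeSet_deleteEdges]
    rw [h1, Finset.card_sdiff_of_subset (by simp [huv]), Finset.card_singleton,
      SimpleGraph.card_edgeFinset_top_eq_card_choose_two, Fintype.card_fin, hchoose]
  -- total count
  have hTot : ∑ e ∈ G.edgeFinset, M.count e = m * n := by
    have h := sum_count_filter M G.edgeFinset (fun _ => True) hmemM
    rw [Finset.filter_true, Multiset.filter_eq_self.2 (fun _ _ => trivial), hMcard] at h
    exact h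
  -- per-vertex count
  have hPer : ∀ w : Fin n, ∑ e ∈ G.edgeFinset.filter (fun e => w ∈ e), M.count e = 2 * m := by
    intro w
    rw [sum_count_filter M _ _ hmemM, ← Multiset.countP_eq_card_filter, hM, countP_sum']
    have h2 : ∀ i : Fin ((n - 1) / 2),
        Multiset.countP (fun e => w ∈ e) ((f i).2.edges : Multiset (Sym2 (Fin n))) = 2 :=
      fun i => countP_edges_two (hHam i) w
    rw [Finset.sum_congr rfl fun i _ => h2 i]
    simp [hk, Nat.mul_comm]
  -- degree computation
  have hinc : ∀ w : Fin n, (G.edgeFinset.filter (fun e => w ∈ e)).card = G.degree w := by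
    intro w
    rw [← SimpleGraph.incidenceFinset_eq_filter, SimpleGraph.card_incidenceFinset_eq_degree]
  have hnb : ∀ w z : Fin n, w ≠ z → ({s(w, z)} : Set (Sym2 (Fin n))) = {s(u, v)} →
      G.degree w = n - 2 := by
    intro w z hwz hset
    have hnbh : G.neighborFinset w = Finset.univ \ {w, z} := by
      ext x
      rw [SimpleGraph.mem_neighborFinset, hG]
      rw [show ({s(u, v)} : Set (Sym2 (Fin n))) = {s(w, z)} from hset.symm]
      simp only [SimpleGraph.deleteEdges_adj, SimpleGraph.top_adj, Set.mem_singleton_iff,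
        Sym2.congr_right, Finset.mem_sdiff, Finset.mem_univ, true_and, Finset.mem_insert,
        Finset.mem_singleton]
      constructor
      · rintro ⟨h1, h2⟩
        push_neg
        exact ⟨fun h => h1 h.symm, h2⟩
      · rintro h
        push_neg at h
        exact ⟨fun hh => h.1 hh.symm, h.2⟩
    rw [← SimpleGraph.card_neighborFinset_eq_degree, hnbh,
      Finset.card_sdiff_of_subset (Finset.subset_univ _), Finset.card_univ, Fintype.card_fin,
      Finset.card_insert_of_notMem (by simpa using hwz), Finset.card_singleton]
  have hdegu : G.degree u = n - 2 := hnb u v huv rfl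
  have hdegv : G.degree v = n - 2 := by
    refine hnb v u (Ne.symm huv) ?_
    rw [Sym2.eq_swap]
  -- existence of a doubly covered edge at a given vertex of degree n-2
  have key : ∀ w : Fin n, G.degree w = n - 2 →
      ∃ e ∈ G.edgeFinset, w ∈ e ∧ 2 ≤ M.count e := by
    intro w hw
    by_contra hcon
    push_neg at hcon
    have hub : ∀ e ∈ G.edgeFinset.filter (fun e => w ∈ e), M.count e ≤ 1 := by
      intro e he
      rcases Finset.mem_filter.1 he with ⟨he1, he2⟩
      have := hcon e he1 he2
      omega
    have hle : ∑ e ∈ G.edgeFinset.filter (fun e => w ∈ e), M.count e ≤ n - 2 := by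
      calc ∑ e ∈ G.edgeFinset.filter (fun e => w ∈ e), M.count e
          ≤ ∑ _e ∈ G.edgeFinset.filter (fun e => w ∈ e), 1 := Finset.sum_le_sum hub
        _ = (G.edgeFinset.filter (fun e => w ∈ e)).card := by simp
        _ = n - 2 := by rw [hinc w, hw]
    rw [hPer w] at hle
    omega
  obtain ⟨eu, heuS, heu_mem, heu2⟩ := key u hdegu
  obtain ⟨ev, hevS, hev_mem, hev2⟩ := key v hdegv
  -- the doubly covered edge is unique
  have hequv : eu = ev := by
    by_contra hne
    have hpair : ({eu, ev} : Finset (Sym2 (Fin n))) ⊆ G.edgeFinset := by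
      intro e he
      rcases Finset.mem_insert.1 he with rfl | he
      · exact heuS
      · rw [Finset.mem_singleton.1 he]; exact hevS
    have hsplit := Finset.sum_sdiff (f := fun e => M.count e) hpair
    have h4 : ∑ e ∈ ({eu, ev} : Finset (Sym2 (Fin n))), M.count e = M.count eu + M.count ev :=
      Finset.sum_pair hne
    have hge : (G.edgeFinset \ {eu, ev}).card ≤ ∑ e ∈ G.edgeFinset \ {eu, ev}, M.count e := by
      calc (G.edgeFinset \ {eu, ev}).card = ∑ _e ∈ G.edgeFinset \ {eu, ev}, 1 := by simp
        _ ≤ ∑ e ∈ G.edgeFinset \ {eu, ev}, M.count e :=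
          Finset.sum_le_sum fun e he => hcount1 e (Finset.mem_sdiff.1 he).1
    have hcards : (G.edgeFinset \ {eu, ev}).card = G.edgeFinset.card - 2 := by
      rw [Finset.card_sdiff_of_subset hpair, Finset.card_pair hne]
    rw [hTot, h4] at hsplit
    rw [hcards, hScard] at hge
    have hN : 3 ≤ m * n := le_trans (by norm_num) (Nat.mul_le_mul hm2 hn)
    beta_reduce at hsplit
    omega
  subst hequv
  have heq : eu = s(u, v) := (Sym2.mem_and_mem_iff huv).1 ⟨heu_mem, hev_mem⟩
  subst heq
  have hfin := SimpleGraph.mem_edgeFinset.1 heuS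
  rw [SimpleGraph.mem_edgeSet, hG] at hfin
  simp at hfin
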